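/- For any density matrix ρ with eigenvalue vector λ and Hamiltonian H with eigenvalue vector ε, the ergotropy equals E(ρ) = Tr[ρH] - λ↓·ε↑, where λ↓ is λ sorted in decreasing order and ε↑ is ε sorted in increasing order; i.e., min over unitaries U of Tr[UρU†H] = λ↓·ε↑. -/

import Mathlib

open Matrix
open scoped BigOperators ComplexOrder

noncomputable def energy {d : ℕ} (H ρ : Matrix (Fin d) (Fin d) ℂ) : ℝ :=
  (Matrix.trace (ρ * H)).re

noncomputable def ergotropy {d : ℕ} (H ρ : Matrix (Fin d) (Fin d) ℂ) : ℝ :=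
  energy H ρ - ⨅ U : Matrix.unitaryGroup (Fin d) ℂ,
    energy H ((U : Matrix (Fin d) (Fin d) ℂ) * ρ * star (U : Matrix (Fin d) (Fin d) ℂ))

noncomputable def antiErgotropy {d : ℕ} (H ρ : Matrix (Fin d) (Fin d) ℂ) : ℝ :=
  (⨆ U : Matrix.unitaryGroup (Fin d) ℂ,
    energy H ((U : Matrix (Fin d) (Fin d) ℂ) * ρ * star (U : Matrix (Fin d) (Fin d) ℂ))) - energy H ρ

noncomputable def minErg {d : ℕ} (H : Matrix (Fin d) (Fin d) ℂ) (E : ℝ) : ℝ :=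
  sInf {x : ℝ | ∃ ρ : Matrix (Fin d) (Fin d) ℂ,
    ρ.PosSemidef ∧ ρ.trace = 1 ∧ energy H ρ = E ∧ ergotropy H ρ = x}

section Aux

variable {d : ℕ}

/-- Cyclicity of the trace: conjugating into the eigenbasis of `H`. -/
lemma trace_conj (U V W Da Db : Matrix (Fin d) (Fin d) ℂ) :
    Matrix.trace (U * (V * Da * star V) * star U * (W * Db * star W))
      = Matrix.trace ((star W * U * V) * Da * star (star W * U * V) * Db) := by
  rw [show U * (V * Da * star V) * star U * (W * Db * star W)
      = (U * (V * Da * star V) * star U * (W * Db)) * star W by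
    simp only [Matrix.mul_assoc]]
  rw [Matrix.trace_mul_comm]
  simp only [Matrix.star_mul, star_star, Matrix.mul_assoc]

/-- Trace of `N Da N* Db` as a real double sum. -/
lemma trace_quad (N : Matrix (Fin d) (Fin d) ℂ) (a b : Fin d → ℝ) :
    Matrix.trace (N * Matrix.diagonal (RCLike.ofReal ∘ a) * star N *
        Matrix.diagonal (RCLike.ofReal ∘ b))
      = ((∑ i, ∑ j, Complex.normSq (N i j) * a j * b i : ℝ) : ℂ) := by
  rw [Matrix.trace]
  push_cast
  refine Finset.sum_congr rfl fun i _ => ?_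
  rw [Matrix.diag_apply, Matrix.mul_diagonal, Matrix.mul_apply, Finset.sum_mul]
  refine Finset.sum_congr rfl fun j _ => ?_
  rw [Matrix.mul_diagonal, Matrix.star_apply]
  push_cast
  simp only [Function.comp_apply, Complex.star_def,
    show (RCLike.ofReal : ℝ → ℂ) = Complex.ofReal from rfl]
  rw [show ((Complex.normSq (N i j) : ℝ) : ℂ) = N i j * (starRingEnd ℂ) (N i j) from
    (Complex.mul_conj _).symm]
  ring

lemma unitary_row_sum {N : Matrix (Fin d) (Fin d) ℂ}
    (hN : N ∈ Matrix.unitaryGroup (Fin d) ℂ) (i : Fin d) :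
    ∑ j, Complex.normSq (N i j) = 1 := by
  have h := Matrix.mem_unitaryGroup_iff.mp hN
  have h2 : (N * star N) i i = (1 : Matrix (Fin d) (Fin d) ℂ) i i := by rw [h]
  rw [Matrix.mul_apply, Matrix.one_apply_eq] at h2
  have : ((∑ j, Complex.normSq (N i j) : ℝ) : ℂ) = ((1 : ℝ) : ℂ) := by
    push_cast
    rw [← h2]
    refine (Finset.sum_congr rfl fun j _ => ?_).symm
    rw [Matrix.star_apply, ← Complex.mul_conj]
    rfl
  exact_mod_cast this

lemma unitary_col_sum {N : Matrix (Fin d) (Fin d) ℂ}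
    (hN : N ∈ Matrix.unitaryGroup (Fin d) ℂ) (j : Fin d) :
    ∑ i, Complex.normSq (N i j) = 1 := by
  have h := Matrix.mem_unitaryGroup_iff'.mp hN
  have h2 : (star N * N) j j = (1 : Matrix (Fin d) (Fin d) ℂ) j j := by rw [h]
  rw [Matrix.mul_apply, Matrix.one_apply_eq] at h2
  have : ((∑ i, Complex.normSq (N i j) : ℝ) : ℂ) = ((1 : ℝ) : ℂ) := by
    push_cast
    rw [← h2]
    refine (Finset.sum_congr rfl fun i _ => ?_).symm
    rw [Matrix.star_apply, Complex.star_def, mul_comm, Complex.mul_conj]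
  exact_mod_cast this

/-- Rearrangement bound for doubly stochastic matrices. -/
lemma ds_rearrangement (B : Matrix (Fin d) (Fin d) ℝ)
    (hB : B ∈ doublyStochastic ℝ (Fin d))
    (lam eps : Fin d → ℝ) (hanti : Antitone lam) (hmono : Monotone eps) :
    ∑ i, lam i * eps i ≤ ∑ i, ∑ j, B i j * lam j * eps i := by
  obtain ⟨w, hw0, hw1, hwB⟩ := exists_eq_sum_perm_of_mem_doublyStochastic hB
  have hBij : ∀ i j, B i j = ∑ π : Equiv.Perm (Fin d),
      if π i = j then w π else 0 := by
    intro i j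
    rw [← hwB]
    rw [Matrix.sum_apply]
    refine Finset.sum_congr rfl fun p _ => ?_
    simp only [Matrix.smul_apply, Equiv.Perm.permMatrix, PEquiv.toMatrix_apply,
      Equiv.toPEquiv_apply, Option.mem_def, Option.some_inj, smul_eq_mul, mul_ite,
      mul_one, mul_zero]
  have hperm : ∀ π : Equiv.Perm (Fin d),
      ∑ i, lam i * eps i ≤ ∑ i, lam (π i) * eps i := fun π =>
    ((hmono.antivary hanti).symm).sum_mul_le_sum_comp_perm_mul
  have h1 : ∀ i, ∑ j, B i j * lam j * eps i
      = ∑ π : Equiv.Perm (Fin d), w π * (lam (π i) * eps i) := by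
    intro i
    calc ∑ j, B i j * lam j * eps i
        = ∑ j, ∑ π : Equiv.Perm (Fin d), (if π i = j then w π else 0) * lam j * eps i := by
          refine Finset.sum_congr rfl fun j _ => ?_
          rw [hBij, Finset.sum_mul, Finset.sum_mul]
      _ = ∑ π : Equiv.Perm (Fin d), ∑ j, (if π i = j then w π else 0) * lam j * eps i :=
          Finset.sum_comm
      _ = ∑ π : Equiv.Perm (Fin d), w π * (lam (π i) * eps i) := by
          refine Finset.sum_congr rfl fun π _ => ?_
          rw [Finset.sum_eq_single (π i)]
          · rw [if_pos rfl]; ring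
          · intro j _ hj
            rw [if_neg (fun h => hj h.symm), zero_mul, zero_mul]
          · intro h; exact absurd (Finset.mem_univ _) h
  have key : ∑ i, ∑ j, B i j * lam j * eps i
      = ∑ π : Equiv.Perm (Fin d), w π * ∑ i, lam (π i) * eps i := by
    calc ∑ i, ∑ j, B i j * lam j * eps i
        = ∑ i, ∑ π : Equiv.Perm (Fin d), w π * (lam (π i) * eps i) :=
          Finset.sum_congr rfl fun i _ => h1 i
      _ = ∑ π : Equiv.Perm (Fin d), ∑ i, w π * (lam (π i) * eps i) := Finset.sum_comm
      _ = ∑ π : Equiv.Perm (Fin d), w π * ∑ i, lam (π i) * eps i := by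
          simp [Finset.mul_sum]
  rw [key]
  calc ∑ i, lam i * eps i = ∑ π : Equiv.Perm (Fin d), w π * ∑ i, lam i * eps i := by
        rw [← Finset.sum_mul, hw1, one_mul]
    _ ≤ ∑ π : Equiv.Perm (Fin d), w π * ∑ i, lam (π i) * eps i :=
        Finset.sum_le_sum fun π _ => mul_le_mul_of_nonneg_left (hperm π) (hw0 π)

end Aux

/-- The minimal energy reachable by unitaries equals the scalar product of the
decreasingly ordered spectrum of ρ with the increasingly ordered spectrum of H. -/
theorem min_energy_unitaries {d : ℕ} (H ρ : Matrix (Fin d) (Fin d) ℂ)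
    (hH : H.IsHermitian) (hρ : ρ.PosSemidef) (ht : ρ.trace = 1)
    (lam eps : Fin d → ℝ) (σ τ : Equiv.Perm (Fin d))
    (hlam : lam = hρ.1.eigenvalues ∘ σ) (hanti : Antitone lam)
    (heps : eps = hH.eigenvalues ∘ τ) (hmono : Monotone eps) :
    (⨅ U : Matrix.unitaryGroup (Fin d) ℂ,
      energy H ((U : Matrix (Fin d) (Fin d) ℂ) * ρ * star (U : Matrix (Fin d) (Fin d) ℂ)))
      = ∑ i, lam i * eps i := by
  classical
  obtain ⟨hρh, -⟩ := id hρ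
  let a : Fin d → ℝ := hρ.1.eigenvalues
  let b : Fin d → ℝ := hH.eigenvalues
  let V : Matrix (Fin d) (Fin d) ℂ := ↑(hρ.1.eigenvectorUnitary)
  let W : Matrix (Fin d) (Fin d) ℂ := ↑(hH.eigenvectorUnitary)
  have hVmem := hρ.1.eigenvectorUnitary.2
  have hWmem := hH.eigenvectorUnitary.2
  -- energy formula
  have hen : ∀ U : Matrix.unitaryGroup (Fin d) ℂ,
      energy H ((U : Matrix (Fin d) (Fin d) ℂ) * ρ * star (U : Matrix (Fin d) (Fin d) ℂ))
        = ∑ i, ∑ j,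
            Complex.normSq ((star W * (U : Matrix (Fin d) (Fin d) ℂ) * V) i j) * a j * b i := by
    intro U
    unfold energy
    conv_lhs => rw [hρ.1.spectral_theorem, hH.spectral_theorem, Unitary.conjStarAlgAut_apply,
      Unitary.conjStarAlgAut_apply]
    rw [trace_conj, trace_quad, Complex.ofReal_re]
  -- the unitary N is unitary
  have hNu : ∀ U : Matrix.unitaryGroup (Fin d) ℂ,
      star W * (U : Matrix (Fin d) (Fin d) ℂ) * V ∈ Matrix.unitaryGroup (Fin d) ℂ := by
    intro U
    exact Submonoid.mul_mem _ (Submonoid.mul_mem _ (Unitary.star_mem hWmem) U.2) hVmem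
  -- lower bound for every unitary
  have hlb : ∀ U : Matrix.unitaryGroup (Fin d) ℂ,
      ∑ i, lam i * eps i ≤
        energy H ((U : Matrix (Fin d) (Fin d) ℂ) * ρ * star (U : Matrix (Fin d) (Fin d) ℂ)) := by
    intro U
    rw [hen U]
    set N : Matrix (Fin d) (Fin d) ℂ := star W * (U : Matrix (Fin d) (Fin d) ℂ) * V with hN
    set B : Matrix (Fin d) (Fin d) ℝ :=
      Matrix.of (fun i j => Complex.normSq (N (τ i) (σ j))) with hB
    have hBds : B ∈ doublyStochastic ℝ (Fin d) := by
      rw [mem_doublyStochastic_iff_sum]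
      refine ⟨fun i j => Complex.normSq_nonneg _, fun i => ?_, fun j => ?_⟩
      · rw [show ∑ j, B i j = ∑ j, Complex.normSq (N (τ i) (σ j)) from rfl,
          Equiv.sum_comp σ (fun j => Complex.normSq (N (τ i) j))]
        exact unitary_row_sum (hNu U) (τ i)
      · rw [show ∑ i, B i j = ∑ i, Complex.normSq (N (τ i) (σ j)) from rfl,
          Equiv.sum_comp τ (fun i => Complex.normSq (N i (σ j)))]
        exact unitary_col_sum (hNu U) (σ j)
    have hsum : ∑ i, ∑ j, Complex.normSq (N i j) * a j * b i
        = ∑ i, ∑ j, B i j * lam j * eps i := by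
      calc ∑ i, ∑ j, Complex.normSq (N i j) * a j * b i
          = ∑ i, ∑ j, Complex.normSq (N i (σ j)) * a (σ j) * b i :=
            (Finset.sum_congr rfl fun i _ =>
              (Equiv.sum_comp σ (fun j => Complex.normSq (N i j) * a j * b i)).symm)
        _ = ∑ i, ∑ j, Complex.normSq (N (τ i) (σ j)) * a (σ j) * b (τ i) :=
            (Equiv.sum_comp τ
              (fun i => ∑ j, Complex.normSq (N i (σ j)) * a (σ j) * b i)).symm
        _ = ∑ i, ∑ j, B i j * lam j * eps i := by
            refine Finset.sum_congr rfl fun i _ => Finset.sum_congr rfl fun j _ => ?_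
            simp [hB, hlam, heps, a, b]
    rw [hsum]
    exact ds_rearrangement B hBds lam eps hanti hmono
  -- the optimal unitary
  set π : Equiv.Perm (Fin d) := τ.symm.trans σ with hπ
  set N₀ : Matrix (Fin d) (Fin d) ℂ :=
    Matrix.of (fun i j => if π i = j then (1 : ℂ) else 0) with hN₀
  have hN₀u : N₀ ∈ Matrix.unitaryGroup (Fin d) ℂ := by
    rw [Matrix.mem_unitaryGroup_iff]
    ext i j
    simp only [Matrix.mul_apply, Matrix.star_apply, hN₀, Matrix.of_apply, Matrix.one_apply,
      apply_ite (star : ℂ → ℂ), star_one, star_zero, ite_mul, one_mul, zero_mul]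
    rw [Finset.sum_eq_single (π i)]
    · simp [Equiv.apply_eq_iff_eq, eq_comm]
    · intro k _ hk
      rw [if_neg (fun h => hk h.symm)]
    · intro h; exact absurd (Finset.mem_univ _) h
  have hWs : star W * W = 1 := (Unitary.mem_iff.mp hWmem).1
  have hVs : star V * V = 1 := (Unitary.mem_iff.mp hVmem).1
  let U₀ : Matrix.unitaryGroup (Fin d) ℂ :=
    ⟨W * N₀ * star V,
      Submonoid.mul_mem _ (Submonoid.mul_mem _ hWmem hN₀u) (Unitary.star_mem hVmem)⟩
  have hU₀N : star W * (U₀ : Matrix (Fin d) (Fin d) ℂ) * V = N₀ := by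
    show star W * (W * N₀ * star V) * V = N₀
    calc star W * (W * N₀ * star V) * V
        = star W * W * (N₀ * (star V * V)) := by simp only [Matrix.mul_assoc]
      _ = N₀ := by rw [hWs, hVs, one_mul, mul_one]
  have htarget : ∑ i, a (π i) * b i = ∑ i, lam i * eps i := by
    rw [← Equiv.sum_comp τ (fun i => a (π i) * b i)]
    refine Finset.sum_congr rfl fun i _ => ?_
    simp [hπ, hlam, heps, a, b]
  have hach : energy H ((U₀ : Matrix (Fin d) (Fin d) ℂ) * ρ *
      star (U₀ : Matrix (Fin d) (Fin d) ℂ)) = ∑ i, lam i * eps i := by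
    rw [hen U₀, hU₀N, ← htarget]
    refine Finset.sum_congr rfl fun i _ => ?_
    rw [Finset.sum_eq_single (π i)]
    · simp [hN₀]
    · intro j _ hj
      have hz : N₀ i j = 0 := by
        simp only [hN₀, Matrix.of_apply]
        exact if_neg fun h => hj h.symm
      simp [hz]
    · intro h; exact absurd (Finset.mem_univ _) h
  -- conclude
  have hbdd : BddBelow (Set.range fun U : Matrix.unitaryGroup (Fin d) ℂ =>
      energy H ((U : Matrix (Fin d) (Fin d) ℂ) * ρ * star (U : Matrix (Fin d) (Fin d) ℂ))) := by
    refine ⟨∑ i, lam i * eps i, ?_⟩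
    rintro x ⟨U, rfl⟩
    exact hlb U
  exact le_antisymm ((ciInf_le hbdd U₀).trans_eq hach) (le_ciInf hlb)
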